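/- Let A be a *local Noetherian ℤ-graded commutative ring with unique *maximal ideal 𝒩, and let M be a nonzero finitely generated graded A-module such that 𝒩 is the only graded prime containing Ann_A(M). Then for each integer j the component M_j is an Artinian A₀-module with ℓ_{A₀}(M_j) ≤ *ℓ_A(M). If moreover there is a homogeneous element of degree 1 in A ∖ 𝒩, then ℓ_{A₀}(M_j) = *ℓ_A(M) for every j. -/

import Mathlib

open DirectSum

section
variable {A M : Type*} [CommRing A] [AddCommGroup M] [Module A M]

/-- The length of a module, as the supremum of lengths of strict chains of submodules. -/
noncomputable def moduleLength (R : Type*) [Ring R] (N : Type*) [AddCommGroup N]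
    [Module R N] : ℕ∞ :=
  ⨆ (n : ℕ) (c : Fin (n + 1) → Submodule R N) (_ : StrictMono c), (n : ℕ∞)

/-- A submodule of a graded module is graded if it is stable under taking homogeneous
components. -/
def IsGradedSubmodule (ℳ : ℤ → AddSubgroup M) [DirectSum.Decomposition ℳ]
    (N : Submodule A M) : Prop :=
  ∀ (i : ℤ) (m : M), m ∈ N → (DirectSum.decompose ℳ m i : M) ∈ N

/-- The *length of a graded module. -/
noncomputable def starLength (A : Type*) [CommRing A] {M : Type*} [AddCommGroup M] [Module A M]
    (ℳ : ℤ → AddSubgroup M) [DirectSum.Decomposition ℳ] : ℕ∞ :=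
  ⨆ (n : ℕ) (c : Fin (n + 1) → Submodule A M) (_ : StrictMono c)
    (_ : ∀ i, IsGradedSubmodule ℳ (c i)), (n : ℕ∞)

variable (𝒜 : ℤ → AddSubgroup A) (ℳ : ℤ → AddSubgroup M)
variable [GradedRing 𝒜] [SetLike.GradedSMul 𝒜 ℳ]

/-- The degree-`j` component of a graded module is a module over the degree-zero subring. -/
noncomputable instance gradeZeroModule (j : ℤ) : Module (𝒜 0) (ℳ j) where
  smul a m := ⟨(a : A) • (m : M), by
    have h := SetLike.GradedSMul.smul_mem a.2 m.2
    rwa [show (0 : ℤ) +ᵥ j = j from zero_add j] at h⟩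
  one_smul m := by
    ext; show ((1 : 𝒜 0) : A) • (m : M) = m
    rw [SetLike.GradeZero.coe_one, one_smul]
  mul_smul a b m := by
    ext; show ((a * b : 𝒜 0) : A) • (m : M) = _
    rw [SetLike.GradeZero.coe_mul]; exact mul_smul _ _ _
  smul_zero a := by ext; exact smul_zero _
  smul_add a m n := by ext; exact smul_add _ _ _
  add_smul a b m := by
    ext; show ((a + b : 𝒜 0) : A) • (m : M) = _
    rw [AddMemClass.coe_add]; exact add_smul _ _ _
  zero_smul m := by ext; exact zero_smul A _

namespace Stmt12Aux

open DirectSum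

variable {A M : Type*} [CommRing A] [AddCommGroup M] [Module A M]
variable (𝒜 : ℤ → AddSubgroup A) (ℳ : ℤ → AddSubgroup M)
variable [GradedRing 𝒜] [SetLike.GradedSMul 𝒜 ℳ]

theorem decompose_smul_homog {B : Type*} [AddCommGroup B] [Module A B] (ℬ : ℤ → AddSubgroup B)
    [DirectSum.Decomposition ℬ] [SetLike.GradedSMul 𝒜 ℬ]
    (r : A) {m : B} {e : ℤ} (hm : m ∈ ℬ e) (i : ℤ) :
    (DirectSum.decompose ℬ (r • m) i : B) = (DirectSum.decompose 𝒜 r (i - e) : A) • m := by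
  classical
  have hsm : ∀ d : ℤ, (DirectSum.decompose 𝒜 r d : A) • m ∈ ℬ (d + e) := fun d =>
    SetLike.GradedSMul.smul_mem (SetLike.coe_mem (DirectSum.decompose 𝒜 r d)) hm
  have hr : r • m
      = ∑ d ∈ (DirectSum.decompose 𝒜 r).support, ((DirectSum.decompose 𝒜 r d : A) • m) := by
    rw [← Finset.sum_smul, DirectSum.sum_support_decompose]
  rw [hr, DirectSum.decompose_sum, DFinsupp.finset_sum_apply, AddSubmonoidClass.coe_finset_sum]
  have hterm : ∀ d ∈ (DirectSum.decompose 𝒜 r).support,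
      (DirectSum.decompose ℬ ((DirectSum.decompose 𝒜 r d : A) • m) i : B)
        = if d = i - e then (DirectSum.decompose 𝒜 r d : A) • m else 0 := by
    intro d _
    by_cases h : d = i - e
    · rw [if_pos h]
      have h2 := hsm d
      rw [show d + e = i by omega] at h2
      exact DirectSum.decompose_of_mem_same ℬ h2
    · rw [if_neg h]
      exact DirectSum.decompose_of_mem_ne ℬ (hsm d) (by omega)
  rw [Finset.sum_congr rfl hterm, Finset.sum_ite_eq' _ (i - e)]
  by_cases h : i - e ∈ (DirectSum.decompose 𝒜 r).support
  · rw [if_pos h]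
  · rw [if_neg h]
    have h0 : DirectSum.decompose 𝒜 r (i - e) = 0 := DFinsupp.notMem_support_iff.mp h
    rw [h0]
    simp

theorem decompose_mem_span {B : Type*} [AddCommGroup B] [Module A B] (ℬ : ℤ → AddSubgroup B)
    [DirectSum.Decomposition ℬ] [SetLike.GradedSMul 𝒜 ℬ]
    {s : Set B} (hs : ∀ y ∈ s, ∃ e, y ∈ ℬ e) {x : B}
    (hx : x ∈ Submodule.span A s) (i : ℤ) :
    (DirectSum.decompose ℬ x i : B) ∈ Submodule.span A s := by
  classical
  obtain ⟨c, hsupp, rfl⟩ := Submodule.mem_span_set.mp hx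
  rw [Finsupp.sum, DirectSum.decompose_sum, DFinsupp.finset_sum_apply,
    AddSubmonoidClass.coe_finset_sum]
  refine Submodule.sum_mem _ fun y hy => ?_
  obtain ⟨e, he⟩ := hs y (hsupp hy)
  rw [decompose_smul_homog 𝒜 ℬ (c y) he i]
  exact Submodule.smul_mem _ _ (Submodule.subset_span (hsupp hy))

theorem mem_of_decompose_mem {B : Type*} [AddCommGroup B] [Module A B] (ℬ : ℤ → AddSubgroup B)
    [DirectSum.Decomposition ℬ] {N : Submodule A B} {x : B}
    (h : ∀ i : ℤ, (DirectSum.decompose ℬ x i : B) ∈ N) : x ∈ N := by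
  classical
  rw [← DirectSum.sum_support_decompose ℬ x]
  exact Submodule.sum_mem _ fun d _ => h d

theorem exists_homog_gens {B : Type*} [AddCommGroup B] [Module A B] (ℬ : ℤ → AddSubgroup B)
    [DirectSum.Decomposition ℬ] (N : Submodule A B)
    (hN : ∀ (i : ℤ) (m : B), m ∈ N → (DirectSum.decompose ℬ m i : B) ∈ N) (hfg : N.FG) :
    ∃ t : Finset B, (∀ y ∈ t, ∃ e, y ∈ ℬ e) ∧ (↑t : Set B) ⊆ N ∧ Submodule.span A ↑t = N := by
  classical
  obtain ⟨s, hs⟩ := hfg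
  have hsub : (↑s : Set B) ⊆ N := by
    rw [← hs]; exact Submodule.subset_span
  refine ⟨s.biUnion fun x =>
      (DirectSum.decompose ℬ x).support.image fun d => (DirectSum.decompose ℬ x d : B),
    ?_, ?_, ?_⟩
  · intro y hy
    simp only [Finset.mem_biUnion, Finset.mem_image] at hy
    obtain ⟨x, -, d, -, rfl⟩ := hy
    exact ⟨d, SetLike.coe_mem _⟩
  · intro y hy
    simp only [Finset.coe_biUnion, Set.mem_iUnion, Finset.mem_coe, Finset.mem_image] at hy
    obtain ⟨x, hx, d, -, rfl⟩ := hy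
    exact hN d x (hsub hx)
  · apply le_antisymm
    · rw [Submodule.span_le]
      intro y hy
      simp only [Finset.coe_biUnion, Set.mem_iUnion, Finset.mem_coe, Finset.mem_image] at hy
      obtain ⟨x, hx, d, -, rfl⟩ := hy
      exact hN d x (hsub hx)
    · rw [← hs, Submodule.span_le]
      intro x hx
      rw [← DirectSum.sum_support_decompose ℬ x]
      refine Submodule.sum_mem _ fun d hd => Submodule.subset_span ?_
      simp only [Finset.coe_biUnion, Set.mem_iUnion, Finset.mem_coe, Finset.mem_image]
      exact ⟨x, hx, d, hd, rfl⟩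

end Stmt12Aux

namespace Stmt12Aux
section
variable {A M : Type*} [CommRing A] [AddCommGroup M] [Module A M]
variable (𝒜 : ℤ → AddSubgroup A) (ℳ : ℤ → AddSubgroup M)
variable [GradedRing 𝒜] [SetLike.GradedSMul 𝒜 ℳ]

/-- The degree-`j` part of a submodule, as a submodule over the degree-zero subring. -/
def comp (N : Submodule A M) (j : ℤ) : Submodule (𝒜 0) (ℳ j) where
  carrier := {x | (x : M) ∈ N}
  add_mem' := fun {x y} hx hy => by
    show ((x + y : ℳ j) : M) ∈ N
    rw [AddMemClass.coe_add]
    exact N.add_mem hx hy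
  zero_mem' := by
    show ((0 : ℳ j) : M) ∈ N
    rw [ZeroMemClass.coe_zero]
    exact N.zero_mem
  smul_mem' := fun c x hx => N.smul_mem (c : A) hx

@[simp] theorem mem_comp {N : Submodule A M} {j : ℤ} {x : ℳ j} :
    x ∈ comp 𝒜 ℳ N j ↔ (x : M) ∈ N := Iff.rfl

@[simp] theorem coe_grade_smul {j : ℤ} (c : 𝒜 0) (x : ℳ j) :
    ((c • x : ℳ j) : M) = (c : A) • (x : M) := rfl

theorem exists_homog_inv (𝒩 : Ideal A)
    (hlocal : ∀ I : Ideal A, Ideal.IsHomogeneous 𝒜 I → I ≠ ⊤ → I ≤ 𝒩)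
    {a : A} {e : ℤ} (ha : a ∈ 𝒜 e) (hna : a ∉ 𝒩) :
    ∃ b, b ∈ 𝒜 (-e) ∧ b * a = 1 := by
  have hhom : Ideal.IsHomogeneous 𝒜 (Ideal.span {a}) := by
    intro i r hr
    exact Stmt12Aux.decompose_mem_span 𝒜 𝒜
      (s := {a}) (by rintro y rfl; exact ⟨e, ha⟩) hr i
  have htop : Ideal.span {a} = ⊤ := by
    by_contra h
    exact hna (hlocal _ hhom h (Ideal.subset_span rfl))
  have h1 : (1 : A) ∈ Ideal.span {a} := htop ▸ Submodule.mem_top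
  obtain ⟨c, hc⟩ := Ideal.mem_span_singleton'.mp h1
  refine ⟨(DirectSum.decompose 𝒜 c (-e) : A), SetLike.coe_mem _, ?_⟩
  have h2 := Stmt12Aux.decompose_smul_homog 𝒜 𝒜 c ha 0
  rw [smul_eq_mul, smul_eq_mul, hc,
    DirectSum.decompose_of_mem_same 𝒜 (SetLike.one_mem_graded 𝒜), zero_sub] at h2
  exact h2.symm

theorem exists_homog_unit (𝒩 : Ideal A)
    (hlocal : ∀ I : Ideal A, Ideal.IsHomogeneous 𝒜 I → I ≠ ⊤ → I ≤ 𝒩)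
    {a : A} (ha : a ∈ 𝒜 1) (hna : a ∉ 𝒩) (e : ℤ) :
    ∃ u v : A, u ∈ 𝒜 e ∧ v ∈ 𝒜 (-e) ∧ v * u = 1 := by
  obtain ⟨b, hb, hba⟩ := exists_homog_inv 𝒜 𝒩 hlocal ha hna
  rcases le_or_gt 0 e with h | h
  · refine ⟨a ^ e.toNat, b ^ e.toNat, ?_, ?_, ?_⟩
    · have h2 := SetLike.pow_mem_graded e.toNat ha
      rwa [nsmul_eq_mul, mul_one, Int.toNat_of_nonneg h] at h2
    · have h2 := SetLike.pow_mem_graded e.toNat hb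
      rwa [nsmul_eq_mul, Int.toNat_of_nonneg h, mul_neg_one] at h2
    · rw [← mul_pow, hba, one_pow]
  · refine ⟨b ^ (-e).toNat, a ^ (-e).toNat, ?_, ?_, ?_⟩
    · have h2 := SetLike.pow_mem_graded (-e).toNat hb
      rwa [nsmul_eq_mul, Int.toNat_of_nonneg (by omega), mul_neg_one, neg_neg] at h2
    · have h2 := SetLike.pow_mem_graded (-e).toNat ha
      rwa [nsmul_eq_mul, mul_one, Int.toNat_of_nonneg (by omega)] at h2
    · rw [← mul_pow, mul_comm a b, hba, one_pow]

/-- The degree-zero part of `𝒩` as an ideal of `𝒜 0`. -/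
def idealZero (𝒩 : Ideal A) : Ideal (𝒜 0) where
  carrier := {x | (x : A) ∈ 𝒩}
  add_mem' := fun {x y} hx hy => by
    show ((x + y : 𝒜 0) : A) ∈ 𝒩
    rw [AddMemClass.coe_add]
    exact 𝒩.add_mem hx hy
  zero_mem' := by
    show ((0 : 𝒜 0) : A) ∈ 𝒩
    rw [ZeroMemClass.coe_zero]
    exact 𝒩.zero_mem
  smul_mem' := fun c x hx => by
    show ((c * x : 𝒜 0) : A) ∈ 𝒩
    rw [SetLike.GradeZero.coe_mul]
    exact 𝒩.mul_mem_left _ hx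

@[simp] theorem mem_idealZero {𝒩 : Ideal A} {x : 𝒜 0} :
    x ∈ idealZero 𝒜 𝒩 ↔ (x : A) ∈ 𝒩 := Iff.rfl

theorem idealZero_isMaximal (𝒩 : Ideal A) (h𝒩top : 𝒩 ≠ ⊤)
    (hlocal : ∀ I : Ideal A, Ideal.IsHomogeneous 𝒜 I → I ≠ ⊤ → I ≤ 𝒩) :
    (idealZero 𝒜 𝒩).IsMaximal := by
  rw [Ideal.isMaximal_iff]
  constructor
  · show ((1 : 𝒜 0) : A) ∉ 𝒩
    rw [SetLike.GradeZero.coe_one]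
    exact fun h => h𝒩top (𝒩.eq_top_iff_one.mpr h)
  · intro J x _ hxI hxJ
    obtain ⟨b, hb, hba⟩ := exists_homog_inv 𝒜 𝒩 hlocal x.2 hxI
    have hb0 : b ∈ 𝒜 0 := by rwa [neg_zero] at hb
    have hmul : (⟨b, hb0⟩ : 𝒜 0) * x = 1 := by
      apply Subtype.ext
      rw [SetLike.GradeZero.coe_mul, SetLike.GradeZero.coe_one]
      exact hba
    exact hmul ▸ J.mul_mem_left _ hxJ

theorem artinian_of_fg_of_torsion {R V : Type*} [CommRing R] [AddCommGroup V] [Module R V]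
    (I : Ideal R) (hmax : I.IsMaximal) (hfin : Module.Finite R V)
    (htor : ∀ a ∈ I, ∀ v : V, a • v = 0) : IsArtinian R V := by
  have htors : Module.IsTorsionBySet R V I := fun x a => htor a.1 a.2 x
  letI : Field (R ⧸ I) := Ideal.Quotient.field I
  letI : Module (R ⧸ I) V := htors.module
  haveI : IsScalarTower R (R ⧸ I) V := htors.isScalarTower
  haveI : Module.Finite (R ⧸ I) V := Module.Finite.of_restrictScalars_finite R (R ⧸ I) V
  haveI hart : IsArtinian (R ⧸ I) V := isArtinian_of_fg_of_artinian'
  let toQ : Submodule R V → Submodule (R ⧸ I) V := fun p =>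
    { carrier := p
      add_mem' := fun h1 h2 => p.add_mem h1 h2
      zero_mem' := p.zero_mem
      smul_mem' := by
        intro c x hx
        obtain ⟨a, rfl⟩ := Ideal.Quotient.mk_surjective c
        rw [htors.mk_smul]
        exact p.smul_mem a hx }
  rw [isArtinian_iff]
  have hlt : ∀ p q : Submodule R V, p < q → toQ p < toQ q := by
    intro p q hpq
    obtain ⟨x, hxq, hxp⟩ := SetLike.exists_of_lt hpq
    exact SetLike.lt_iff_le_and_exists.mpr ⟨fun z hz => hpq.le hz, x, hxq, hxp⟩
  exact Subrelation.wf (fun {p q} h => hlt p q h)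
    (InvImage.wf toQ ((isArtinian_iff _ _).mp hart))

end
end Stmt12Aux

theorem Stmt12Aux.artinian_of_filtration {R V : Type*} [CommRing R] [AddCommGroup V]
    [Module R V] (I : Ideal R) (hmax : I.IsMaximal) (W : ℕ → Submodule R V) (n : ℕ)
    (hmono : ∀ i, W (i + 1) ≤ W i) (hbot : W n = ⊥) (htop : W 0 = ⊤)
    (hspan : ∀ i, ∃ S : Finset V, (↑S : Set V) ⊆ W i ∧
      W i ≤ Submodule.span R ↑S ⊔ W (i + 1))
    (htor : ∀ i, ∀ a ∈ I, ∀ v ∈ W i, a • v ∈ W (i + 1)) :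
    IsArtinian R V := by
  classical
  have hstep : ∀ i, IsArtinian R (W (i + 1)) → IsArtinian R (W i) := by
    intro i hart
    set Wi' : Submodule R (W i) := (W (i + 1)).comap (W i).subtype with hWi'
    haveI h1 : IsArtinian R Wi' :=
      isArtinian_of_linearEquiv (Submodule.comapSubtypeEquivOfLe (hmono i)).symm
    haveI h2 : IsArtinian R (W i ⧸ Wi') := by
      apply Stmt12Aux.artinian_of_fg_of_torsion I hmax
      · -- Module.Finite
        obtain ⟨S, hSsub, hSle⟩ := hspan i
        have hmemWi : ∀ s ∈ S, s ∈ W i := fun s hs => hSsub hs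
        set S' : Finset (W i) := S.attach.image fun s => (⟨s.1, hmemWi s.1 s.2⟩ : W i)
          with hS'
        refine ⟨⟨S'.image Wi'.mkQ, ?_⟩⟩
        rw [eq_top_iff]
        rintro q -
        obtain ⟨w, rfl⟩ := Wi'.mkQ_surjective q
        have hw : (w : V) ∈ Submodule.span R ↑S ⊔ W (i + 1) := hSle w.2
        rw [Submodule.mem_sup] at hw
        obtain ⟨p, hp, v, hv, hpv⟩ := hw
        have hpWi : p ∈ W i := by
          have hsub : p = (w : V) - v := by rw [← hpv]; abel
          rw [hsub]
          exact Submodule.sub_mem _ w.2 (hmono i hv)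
        have hq : Wi'.mkQ w = Wi'.mkQ ⟨p, hpWi⟩ := by
          rw [Submodule.mkQ_apply, Submodule.mkQ_apply]
          refine (Submodule.Quotient.eq Wi').mpr ?_
          rw [hWi', Submodule.mem_comap]
          have hcoe : ((W i).subtype (w - ⟨p, hpWi⟩) : V) = v := by
            rw [Submodule.subtype_apply, AddSubgroupClass.coe_sub]
            show (w : V) - p = v
            rw [← hpv]
            abel
          rw [hcoe]
          exact hv
        rw [hq]
        have himg : Subtype.val '' (↑S' : Set (W i)) = (↑S : Set V) := by
          ext z
          constructor
          · rintro ⟨z', hz', rfl⟩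
            rw [hS'] at hz'
            simp only [Finset.coe_image, Set.mem_image, Finset.mem_coe] at hz'
            obtain ⟨s, -, rfl⟩ := hz'
            exact s.2
          · intro hz
            refine ⟨⟨z, hmemWi z hz⟩, ?_, rfl⟩
            rw [hS']
            simp only [Finset.coe_image, Set.mem_image, Finset.mem_coe]
            exact ⟨⟨z, hz⟩, Finset.mem_attach _ _, rfl⟩
        have hmap : Submodule.map (W i).subtype (Submodule.span R ↑S')
            = Submodule.span R (↑S : Set V) := by
          rw [Submodule.map_span, Submodule.coe_subtype, himg]
        have hp' : p ∈ Submodule.map (W i).subtype (Submodule.span R ↑S') :=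
          hmap ▸ hp
        obtain ⟨p', hp'span, hp'eq⟩ := hp'
        have hpp : (⟨p, hpWi⟩ : W i) = p' := Subtype.ext hp'eq.symm
        rw [hpp]
        have hmk : Wi'.mkQ p' ∈ Submodule.map Wi'.mkQ (Submodule.span R ↑S') :=
          Submodule.mem_map_of_mem hp'span
        rw [Submodule.map_span] at hmk
        refine Submodule.span_mono ?_ hmk
        rintro z ⟨z', hz', rfl⟩
        exact Finset.mem_coe.mpr (Finset.mem_image_of_mem _ hz')
      · -- torsion
        intro c hc q
        obtain ⟨w, rfl⟩ := Wi'.mkQ_surjective q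
        rw [← map_smul, Submodule.mkQ_apply, Submodule.Quotient.mk_eq_zero]
        rw [hWi', Submodule.mem_comap]
        have hcoe : ((W i).subtype (c • w) : V) = c • (w : V) := rfl
        rw [hcoe]
        exact htor i c hc _ w.2
    exact isArtinian_of_range_eq_ker Wi'.subtype Wi'.mkQ
      (by rw [Submodule.range_subtype, Submodule.ker_mkQ])
  have hall : ∀ d i, n ≤ i + d → IsArtinian R (W i) := by
    intro d
    induction d with
    | zero =>
      intro i hi
      have hWi : W i = ⊥ := by
        rw [eq_bot_iff, ← hbot]
        have : ∀ k, W (n + k) ≤ W n := by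
          intro k
          induction k with
          | zero => exact le_rfl
          | succ k ih => exact le_trans (by rw [← Nat.add_assoc]; exact hmono (n + k)) ih
        have h2 := this (i - n)
        rwa [Nat.add_sub_cancel' (by omega)] at h2
      rw [hWi]
      haveI : Subsingleton (↥(⊥ : Submodule R V)) := inferInstance
      haveI : Finite (↥(⊥ : Submodule R V)) := Finite.of_subsingleton
      exact isArtinian_of_finite
    | succ d ih =>
      intro i hi
      by_cases h : n ≤ i + d
      · exact ih i h
      · exact hstep i (ih (i + 1) (by omega))
  haveI := hall n 0 (by omega)
  exact isArtinian_of_linearEquiv (LinearEquiv.ofTop (W 0) htop)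

namespace Stmt12Aux
section
variable {A M : Type*} [CommRing A] [AddCommGroup M] [Module A M]
variable (𝒜 : ℤ → AddSubgroup A) (ℳ : ℤ → AddSubgroup M)
variable [GradedRing 𝒜] [SetLike.GradedSMul 𝒜 ℳ] [DirectSum.Decomposition ℳ]

theorem moduleLength_le_starLength (j : ℤ) :
    moduleLength (𝒜 0) (ℳ j) ≤ starLength A ℳ := by
  classical
  refine iSup_le fun n => iSup_le fun c => iSup_le fun hc => ?_
  set f : Submodule (𝒜 0) (ℳ j) → Submodule A M :=
    fun W => Submodule.span A (Subtype.val '' (W : Set (ℳ j))) with hf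
  have himg : ∀ W : Submodule (𝒜 0) (ℳ j), ∀ y ∈ Subtype.val '' (W : Set (ℳ j)),
      ∃ e, y ∈ ℳ e := by
    rintro W y ⟨z, _, rfl⟩
    exact ⟨j, z.2⟩
  have hgr : ∀ W : Submodule (𝒜 0) (ℳ j), IsGradedSubmodule ℳ (f W) :=
    fun W i m hm => decompose_mem_span 𝒜 ℳ (himg W) hm i
  have hkey : ∀ (W : Submodule (𝒜 0) (ℳ j)) (x : M), x ∈ f W →
      (DirectSum.decompose ℳ x j : M) ∈ Subtype.val '' (W : Set (ℳ j)) := by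
    intro W x hx
    obtain ⟨cc, hsupp, rfl⟩ := Submodule.mem_span_set.mp hx
    rw [Finsupp.sum, DirectSum.decompose_sum, DFinsupp.finset_sum_apply,
      AddSubmonoidClass.coe_finset_sum]
    have hmem : ∑ y ∈ cc.support, (DirectSum.decompose ℳ (cc y • y) j : M)
        ∈ AddSubgroup.map (ℳ j).subtype W.toAddSubgroup := by
      refine AddSubgroup.sum_mem _ fun y hy => ?_
      obtain ⟨z, hz, rfl⟩ := hsupp hy
      rw [decompose_smul_homog 𝒜 ℳ (cc z) z.2 j, show j - j = 0 from sub_self j]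
      exact ⟨DirectSum.decompose 𝒜 (cc ↑z) 0 • z, W.smul_mem _ hz, rfl⟩
    obtain ⟨z, hz, hze⟩ := hmem
    exact ⟨z, hz, hze⟩
  have hmono : ∀ {W W' : Submodule (𝒜 0) (ℳ j)}, W ≤ W' → f W ≤ f W' :=
    fun h => Submodule.span_mono (Set.image_mono h)
  have hstrict : StrictMono fun i => f (c i) := by
    intro i i' hii
    have hlt := hc hii
    obtain ⟨z, hz', hz⟩ := SetLike.exists_of_lt hlt
    refine lt_of_le_of_ne (hmono hlt.le) fun heq => hz ?_
    have hmem : (z : M) ∈ f (c i) := by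
      rw [show f (c i) = f (c i') from heq]
      exact Submodule.subset_span ⟨z, hz', rfl⟩
    obtain ⟨w, hw, hwz⟩ := hkey _ _ hmem
    rw [DirectSum.decompose_of_mem_same ℳ z.2] at hwz
    rwa [← Subtype.ext hwz]
  exact le_iSup_of_le n (le_iSup_of_le (fun i => f (c i))
    (le_iSup_of_le hstrict (le_iSup_of_le (fun i => hgr (c i)) le_rfl)))

theorem starLength_le_moduleLength (𝒩 : Ideal A)
    (hlocal : ∀ I : Ideal A, Ideal.IsHomogeneous 𝒜 I → I ≠ ⊤ → I ≤ 𝒩)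
    {a : A} (ha : a ∈ 𝒜 1) (hna : a ∉ 𝒩) (j : ℤ) :
    starLength A ℳ ≤ moduleLength (𝒜 0) (ℳ j) := by
  classical
  refine iSup_le fun n => iSup_le fun C => iSup_le fun hC => iSup_le fun hgr => ?_
  have hstrict : StrictMono fun i => comp 𝒜 ℳ (C i) j := by
    intro i i' hii
    have hlt := hC hii
    obtain ⟨x, hx', hx⟩ := SetLike.exists_of_lt hlt
    have hd : ∃ d : ℤ, (DirectSum.decompose ℳ x d : M) ∈ C i' ∧
        (DirectSum.decompose ℳ x d : M) ∉ C i := by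
      by_contra h
      push_neg at h
      exact hx (mem_of_decompose_mem ℳ fun d => h d (hgr i' d x hx'))
    obtain ⟨d, hd', hdn⟩ := hd
    obtain ⟨u, v, hu, hv, hvu⟩ := exists_homog_unit 𝒜 𝒩 hlocal ha hna (j - d)
    have hz : u • (DirectSum.decompose ℳ x d : M) ∈ ℳ (j - d + d) :=
      SetLike.GradedSMul.smul_mem hu (SetLike.coe_mem (DirectSum.decompose ℳ x d))
    rw [show j - d + d = j by omega] at hz
    refine SetLike.lt_iff_le_and_exists.mpr ⟨fun w hw => hlt.le hw, ⟨_, hz⟩, ?_, ?_⟩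
    · exact (C i').smul_mem u hd'
    · intro hmem
      apply hdn
      have h2 : v • (u • (DirectSum.decompose ℳ x d : M)) ∈ C i := (C i).smul_mem v hmem
      rwa [smul_smul, hvu, one_smul] at h2
  exact le_iSup_of_le n (le_iSup_of_le (fun i => comp 𝒜 ℳ (C i) j)
    (le_iSup_of_le hstrict le_rfl))

end
end Stmt12Aux

namespace Stmt12Aux
section
variable {A M : Type*} [CommRing A] [AddCommGroup M] [Module A M]
variable (𝒜 : ℤ → AddSubgroup A) (ℳ : ℤ → AddSubgroup M)
variable [GradedRing 𝒜] [SetLike.GradedSMul 𝒜 ℳ] [DirectSum.Decomposition ℳ]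

theorem exists_finite_span_step (𝒩 : Ideal A)
    (hlocal : ∀ I : Ideal A, Ideal.IsHomogeneous 𝒜 I → I ≠ ⊤ → I ≤ 𝒩)
    (j : ℤ) (i : ℕ) {t : Finset M} (htH : ∀ y ∈ t, ∃ e, y ∈ ℳ e)
    (htN : (↑t : Set M) ⊆ (𝒩 ^ i • ⊤ : Submodule A M))
    (htspan : Submodule.span A ↑t = (𝒩 ^ i • ⊤ : Submodule A M)) :
    ∃ S : Finset (ℳ j), (∀ s ∈ S, (s : M) ∈ (𝒩 ^ i • ⊤ : Submodule A M)) ∧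
      comp 𝒜 ℳ (𝒩 ^ i • ⊤) j ≤
        Submodule.span (𝒜 0) ↑S ⊔ comp 𝒜 ℳ (𝒩 ^ (i + 1) • ⊤) j := by
  classical
  have hNsucc : ∀ {m : M}, m ∈ 𝒩 • (𝒩 ^ i • ⊤ : Submodule A M) →
      m ∈ (𝒩 ^ (i + 1) • ⊤ : Submodule A M) := by
    intro m hm
    rwa [pow_succ', ← Ideal.smul_eq_mul, Submodule.smul_assoc]
  set deg : M → ℤ := fun y => if h : ∃ e, y ∈ ℳ e then h.choose else 0 with hdeg
  have hdegmem : ∀ y ∈ t, y ∈ ℳ (deg y) := by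
    intro y hy
    have h := htH y hy
    simp only [hdeg, dif_pos h]
    exact h.choose_spec
  set pick : M → ℳ j := fun y =>
    if hy : y ∈ ℳ (deg y) then
      if h : ∃ u, u ∈ 𝒜 (j - deg y) ∧ u ∉ 𝒩 then
        ⟨h.choose • y, by
          have h2 : h.choose • y ∈ ℳ (j - deg y + deg y) :=
            SetLike.GradedSMul.smul_mem h.choose_spec.1 hy
          rwa [show j - deg y + deg y = j by omega] at h2⟩
      else 0
    else 0 with hpick
  refine ⟨t.image pick, ?_, ?_⟩
  · intro s hs
    simp only [Finset.mem_image] at hs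
    obtain ⟨y, hy, rfl⟩ := hs
    simp only [hpick]
    rw [dif_pos (hdegmem y hy)]
    by_cases h : ∃ u, u ∈ 𝒜 (j - deg y) ∧ u ∉ 𝒩
    · rw [dif_pos h]
      exact Submodule.smul_mem _ _ (htN hy)
    · rw [dif_neg h]
      exact Submodule.zero_mem _
  · intro x hx
    rw [mem_comp] at hx
    have hx' : (x : M) ∈ Submodule.span A ↑t := htspan ▸ hx
    obtain ⟨cc, hsupp, hsum⟩ := Submodule.mem_span_set.mp hx'
    have hTymem : ∀ y ∈ cc.support,
        (DirectSum.decompose 𝒜 (cc y) (j - deg y) : A) • y ∈ ℳ j := by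
      intro y hy
      have h2 : (DirectSum.decompose 𝒜 (cc y) (j - deg y) : A) • y
          ∈ ℳ (j - deg y + deg y) :=
        SetLike.GradedSMul.smul_mem
          (SetLike.coe_mem (DirectSum.decompose 𝒜 (cc y) (j - deg y)))
          (hdegmem y (hsupp hy))
      rwa [show j - deg y + deg y = j by omega] at h2
    have hxeq : x = ∑ y ∈ cc.support.attach,
        (⟨_, hTymem y.1 y.2⟩ : ℳ j) := by
      apply Subtype.ext
      rw [AddSubmonoidClass.coe_finset_sum]
      have h3 : ∑ y ∈ cc.support.attach,
          ((⟨_, hTymem y.1 y.2⟩ : ℳ j) : M)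
          = ∑ y ∈ cc.support, (DirectSum.decompose 𝒜 (cc y) (j - deg y) : A) • y := by
        rw [← Finset.sum_attach cc.support
          (fun y => (DirectSum.decompose 𝒜 (cc y) (j - deg y) : A) • y)]
      rw [h3]
      have h4 : ((x : M)) = (DirectSum.decompose ℳ (x : M) j : M) :=
        (DirectSum.decompose_of_mem_same ℳ x.2).symm
      rw [h4, ← hsum, Finsupp.sum, DirectSum.decompose_sum, DFinsupp.finset_sum_apply,
        AddSubmonoidClass.coe_finset_sum]
      exact Finset.sum_congr rfl fun y hy =>
        decompose_smul_homog 𝒜 ℳ (cc y) (hdegmem y (hsupp hy)) j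
    rw [hxeq]
    refine Submodule.sum_mem _ fun y _ => ?_
    by_cases hcase : ∃ u, u ∈ 𝒜 (j - deg y.1) ∧ u ∉ 𝒩
    · apply Submodule.mem_sup_left
      obtain ⟨b, hbmem, hb⟩ := exists_homog_inv 𝒜 𝒩 hlocal hcase.choose_spec.1
        hcase.choose_spec.2
      have hc0 : (DirectSum.decompose 𝒜 (cc y.1) (j - deg y.1) : A) * b ∈ 𝒜 0 := by
        have h5 := SetLike.mul_mem_graded
          (SetLike.coe_mem (DirectSum.decompose 𝒜 (cc y.1) (j - deg y.1))) hbmem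
        rwa [show j - deg y.1 + -(j - deg y.1) = 0 by ring] at h5
      have heq : (⟨_, hTymem y.1 y.2⟩ : ℳ j)
          = (⟨_, hc0⟩ : (𝒜 0)) • pick y.1 := by
        apply Subtype.ext
        have hp : ((pick y.1 : ℳ j) : M) = hcase.choose • y.1 := by
          simp only [hpick]
          rw [dif_pos (hdegmem y.1 (hsupp y.2)), dif_pos hcase]
        rw [coe_grade_smul, hp]
        show (DirectSum.decompose 𝒜 (cc y.1) (j - deg y.1) : A) • (y : M)
            = ((DirectSum.decompose 𝒜 (cc y.1) (j - deg y.1) : A) * b) • (hcase.choose • y.1)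
        rw [smul_smul, mul_assoc, hb, mul_one]
      rw [heq]
      refine Submodule.smul_mem _ _ (Submodule.subset_span ?_)
      exact Finset.mem_coe.mpr (Finset.mem_image_of_mem pick (hsupp y.2))
    · apply Submodule.mem_sup_right
      rw [mem_comp]
      push_neg at hcase
      apply hNsucc
      exact Submodule.smul_mem_smul (hcase _ (SetLike.coe_mem _)) (htN (hsupp y.2))

theorem exists_homog_gens_pow [IsNoetherianRing A] [Module.Finite A M]
    (𝒩 : Ideal A) (h𝒩 : Ideal.IsHomogeneous 𝒜 𝒩) (i : ℕ) :
    ∃ t : Finset M, (∀ y ∈ t, ∃ e, y ∈ ℳ e) ∧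
      (↑t : Set M) ⊆ (𝒩 ^ i • ⊤ : Submodule A M) ∧
      Submodule.span A ↑t = (𝒩 ^ i • ⊤ : Submodule A M) := by
  classical
  induction i with
  | zero =>
    have htop : (𝒩 ^ 0 • ⊤ : Submodule A M) = ⊤ := by
      rw [pow_zero, Ideal.one_eq_top, Submodule.top_smul]
    rw [htop]
    exact exists_homog_gens ℳ ⊤ (fun _ _ _ => Submodule.mem_top) Module.Finite.fg_top
  | succ i ih =>
    obtain ⟨t, htH, htN, htsp⟩ := ih
    obtain ⟨H, hHh, hHN, hHsp⟩ := exists_homog_gens 𝒜 (𝒩 : Submodule A A)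
      (fun d r hr => h𝒩 d hr) (IsNoetherian.noetherian _)
    have hsucc : (𝒩 ^ (i + 1) • ⊤ : Submodule A M) = 𝒩 • (𝒩 ^ i • ⊤ : Submodule A M) := by
      rw [pow_succ', ← Ideal.smul_eq_mul, Submodule.smul_assoc]
    refine ⟨H.biUnion fun h => t.image fun y => h • y, ?_, ?_, ?_⟩
    · intro z hz
      simp only [Finset.mem_biUnion, Finset.mem_image] at hz
      obtain ⟨h, hh, y, hy, rfl⟩ := hz
      obtain ⟨eh, heh⟩ := hHh h hh
      obtain ⟨ey, hey⟩ := htH y hy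
      exact ⟨eh + ey, SetLike.GradedSMul.smul_mem heh hey⟩
    · intro z hz
      simp only [Finset.coe_biUnion, Set.mem_iUnion, Finset.mem_coe, Finset.mem_image] at hz
      obtain ⟨h, hh, y, hy, rfl⟩ := hz
      rw [hsucc]
      exact Submodule.smul_mem_smul (hHN hh) (htN hy)
    · rw [hsucc, ← htsp, ← hHsp]
      have hspan : Submodule.span A (↑H : Set A) • Submodule.span A (↑t : Set M)
          = Submodule.span A (⋃ s ∈ (↑H : Set A), ⋃ y ∈ (↑t : Set M), {s • y}) :=
        by rw [← Set.image2_eq_iUnion]; exact Submodule.span_smul_span (R := A) (M := M) ↑H ↑t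
      rw [hspan]
      apply le_antisymm <;> rw [Submodule.span_le] <;> intro z hz
      · simp only [Finset.coe_biUnion, Set.mem_iUnion, Finset.mem_coe, Finset.mem_image] at hz
        obtain ⟨h, hh, y, hy, rfl⟩ := hz
        refine Submodule.subset_span ?_
        simp only [Set.mem_iUnion, Set.mem_singleton_iff]
        exact ⟨h, hh, y, hy, rfl⟩
      · simp only [Set.mem_iUnion, Set.mem_singleton_iff] at hz
        obtain ⟨h, hh, y, hy, rfl⟩ := hz
        refine Submodule.subset_span ?_
        simp only [Finset.coe_biUnion, Set.mem_iUnion, Finset.mem_coe, Finset.mem_image]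
        exact ⟨h, hh, y, hy, rfl⟩

end
end Stmt12Aux

namespace Stmt12Aux
section
variable {A M : Type*} [CommRing A] [AddCommGroup M] [Module A M]
variable (𝒜 : ℤ → AddSubgroup A) (ℳ : ℤ → AddSubgroup M)
variable [GradedRing 𝒜] [SetLike.GradedSMul 𝒜 ℳ] [DirectSum.Decomposition ℳ]

set_option synthInstance.maxHeartbeats 1000000 in
set_option maxHeartbeats 2000000 in
theorem isArtinian_component [IsNoetherianRing A] [Module.Finite A M]
    (𝒩 : Ideal A) (h𝒩 : Ideal.IsHomogeneous 𝒜 𝒩) (h𝒩top : 𝒩 ≠ ⊤)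
    (hlocal : ∀ I : Ideal A, Ideal.IsHomogeneous 𝒜 I → I ≠ ⊤ → I ≤ 𝒩)
    {n : ℕ} (hn : 𝒩 ^ n ≤ Module.annihilator A M) (j : ℤ) :
    IsArtinian (𝒜 0) (ℳ j) := by
  classical
  set W : ℕ → Submodule (𝒜 0) (ℳ j) := fun i => comp 𝒜 ℳ (𝒩 ^ i • ⊤) j with hW
  have hWmono : ∀ i, W (i + 1) ≤ W i := by
    intro i x hx
    exact Submodule.smul_mono_left (Ideal.pow_le_pow_right (Nat.le_succ i)) hx
  have hWbot : W n = ⊥ := by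
    rw [eq_bot_iff]
    intro x hx
    have hx' : (x : M) ∈ (𝒩 ^ n • ⊤ : Submodule A M) := hx
    have h2 : (x : M) ∈ (Module.annihilator A M) • (⊤ : Submodule A M) :=
      Submodule.smul_mono_left hn hx'
    have h3 : (Module.annihilator A M) • (⊤ : Submodule A M) ≤ ⊥ := by
      rw [Submodule.smul_le]
      intro r hr m _
      exact Module.mem_annihilator.mp hr m
    exact (Submodule.mem_bot (𝒜 0)).mpr (Subtype.ext (h3 h2))
  have hWtop : W 0 = ⊤ := by
    rw [eq_top_iff]
    intro x _
    show (x : M) ∈ (𝒩 ^ 0 • ⊤ : Submodule A M)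
    rw [pow_zero, Ideal.one_eq_top, Submodule.top_smul]
    exact Submodule.mem_top
  have hspan : ∀ i, ∃ S : Finset (ℳ j), (↑S : Set (ℳ j)) ⊆ W i ∧
      W i ≤ Submodule.span (𝒜 0) ↑S ⊔ W (i + 1) := by
    intro i
    obtain ⟨t, htH, htN, htsp⟩ := exists_homog_gens_pow 𝒜 ℳ 𝒩 h𝒩 i
    obtain ⟨S, hSmem, hSle⟩ := exists_finite_span_step 𝒜 ℳ 𝒩 hlocal j i htH htN htsp
    exact ⟨S, fun s hs => hSmem s hs, hSle⟩
  have htor : ∀ i, ∀ a ∈ idealZero 𝒜 𝒩, ∀ v ∈ W i, a • v ∈ W (i + 1) := by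
    intro i a ha v hv
    show ((a • v : ℳ j) : M) ∈ (𝒩 ^ (i + 1) • ⊤ : Submodule A M)
    rw [coe_grade_smul]
    have hv' : (v : M) ∈ (𝒩 ^ i • ⊤ : Submodule A M) := hv
    have h5 : (a : A) • (v : M) ∈ 𝒩 • (𝒩 ^ i • ⊤ : Submodule A M) :=
      Submodule.smul_mem_smul ha hv'
    rwa [pow_succ', ← Ideal.smul_eq_mul, Submodule.smul_assoc]
  exact artinian_of_filtration (idealZero 𝒜 𝒩) (idealZero_isMaximal 𝒜 𝒩 h𝒩top hlocal)
    W n hWmono hWbot hWtop hspan htor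

end
end Stmt12Aux
/-- Let `(A, 𝒩)` be a *local Noetherian graded ring and `M ≠ 0` a finitely generated graded
`A`-module such that `𝒩` is the only graded prime containing `Ann_A(M)`. Then each component
`M_j` is an Artinian `A₀`-module with `ℓ_{A₀}(M_j) ≤ *ℓ_A(M)`; and if there is a homogeneous
element of degree `1` in `A ∖ 𝒩`, then `ℓ_{A₀}(M_j) = *ℓ_A(M)` for every `j`. -/
theorem stmt_12 [DirectSum.Decomposition ℳ] [IsNoetherianRing A] [Module.Finite A M]
    (hM : ∃ m : M, m ≠ 0)
    (𝒩 : Ideal A) (h𝒩 : Ideal.IsHomogeneous 𝒜 𝒩) (h𝒩top : 𝒩 ≠ ⊤)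
    (hlocal : ∀ I : Ideal A, Ideal.IsHomogeneous 𝒜 I → I ≠ ⊤ → I ≤ 𝒩)
    (hsupp : ∀ 𝔭 : Ideal A, 𝔭.IsPrime → Ideal.IsHomogeneous 𝒜 𝔭 →
      Module.annihilator A M ≤ 𝔭 → 𝔭 = 𝒩) :
    (∀ j : ℤ, IsArtinian (𝒜 0) (ℳ j) ∧ moduleLength (𝒜 0) (ℳ j) ≤ starLength A ℳ) ∧
      ((∃ a ∈ 𝒜 1, a ∉ 𝒩) →
        ∀ j : ℤ, moduleLength (𝒜 0) (ℳ j) = starLength A ℳ) := by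
  classical
  have hmodle : ∀ j : ℤ, moduleLength (𝒜 0) (ℳ j) ≤ starLength A ℳ := fun j =>
    Stmt12Aux.moduleLength_le_starLength 𝒜 ℳ j
  constructor
  · intro j
    refine ⟨?_, hmodle j⟩
    -- the annihilator is homogeneous
    have hannhom : Ideal.IsHomogeneous 𝒜 (Module.annihilator A M) := by
      intro i a ha
      rw [Module.mem_annihilator] at ha ⊢
      intro m
      have hhom : ∀ {m' : M} {e : ℤ}, m' ∈ ℳ e →
          (DirectSum.decompose 𝒜 a i : A) • m' = 0 := by
        intro m' e hm'
        have h1 := Stmt12Aux.decompose_smul_homog 𝒜 ℳ a hm' (i + e)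
        rw [ha m', show i + e - e = i by ring] at h1
        rw [← h1, DirectSum.decompose_zero]
        rfl
      conv_lhs => rw [← DirectSum.sum_support_decompose ℳ m]
      rw [Finset.smul_sum]
      exact Finset.sum_eq_zero fun d _ => hhom (SetLike.coe_mem _)
    have hanntop : Module.annihilator A M ≠ ⊤ := by
      obtain ⟨m, hm⟩ := hM
      intro h
      have h1 : (1 : A) ∈ Module.annihilator A M := h ▸ Submodule.mem_top
      exact hm (by simpa using Module.mem_annihilator.mp h1 m)
    have h𝒩prime : 𝒩.IsPrime := by
      apply h𝒩.isPrime_of_homogeneous_mem_or_mem h𝒩top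
      intro x y hx hy hxy
      by_contra h
      push_neg at h
      obtain ⟨ex, hx'⟩ := hx
      obtain ⟨ey, hy'⟩ := hy
      obtain ⟨bx, -, hbx⟩ := Stmt12Aux.exists_homog_inv 𝒜 𝒩 hlocal hx' h.1
      obtain ⟨by', -, hby⟩ := Stmt12Aux.exists_homog_inv 𝒜 𝒩 hlocal hy' h.2
      have hone : (bx * by') * (x * y) = 1 := by
        rw [mul_mul_mul_comm, hbx, hby, one_mul]
      have h1 : (1 : A) ∈ 𝒩 := hone ▸ 𝒩.mul_mem_left _ hxy
      exact h𝒩top (𝒩.eq_top_iff_one.mpr h1)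
    have hrad : (Module.annihilator A M).radical = 𝒩 := by
      rw [hannhom.radical_eq]
      apply le_antisymm
      · exact sInf_le ⟨h𝒩, hlocal _ hannhom hanntop, h𝒩prime⟩
      · apply le_sInf
        rintro J ⟨hJh, hJle, hJp⟩
        exact (hsupp J hJp hJh hJle).ge
    obtain ⟨n, hn⟩ := Ideal.exists_pow_le_of_le_radical_of_fg hrad.ge
      (IsNoetherian.noetherian 𝒩)
    exact Stmt12Aux.isArtinian_component 𝒜 ℳ 𝒩 h𝒩 h𝒩top hlocal hn j
  · rintro ⟨a, ha, hna⟩ j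
    exact le_antisymm (hmodle j)
      (Stmt12Aux.starLength_le_moduleLength 𝒜 ℳ 𝒩 hlocal ha hna j)
end
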